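/- Let P be a convex d-polytope in ℝ^d with the origin o in its interior, and let P° be its polar. Let F be a k-face of P (0 ≤ k ≤ d−1) and F* the corresponding (d−k−1)-face of P°. Then F contains a nondegenerate equilibrium point of P with respect to o if and only if F* contains a nondegenerate equilibrium point of P° with respect to o. -/

import Mathlib

open scoped RealInnerProductSpace

noncomputable section

abbrev En (d : ℕ) := EuclideanSpace ℝ (Fin d)

/-- The polar of a set `s`: all `y` with `⟪x, y⟫ ≤ 1` for every `x ∈ s`. -/
def polarSet {d : ℕ} (s : Set (En d)) : Set (En d) := {y | ∀ x ∈ s, ⟪x, y⟫ ≤ 1}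

/-- The dimension of a subset of `ℝ^d` (the dimension of its affine hull). -/
def faceDimD {d : ℕ} (F : Set (En d)) : ℕ := Module.finrank ℝ (vectorSpan ℝ F)

/-- The set of (nonempty, exposed) `k`-dimensional faces of `P`. -/
def kFacesD {d : ℕ} (P : Set (En d)) (k : ℕ) : Set (Set (En d)) :=
  {F | IsExposed ℝ P F ∧ F.Nonempty ∧ faceDimD F = k}

/-- The face of the polar polytope corresponding to the face `F` of `P`. -/
def dualFace {d : ℕ} (P F : Set (En d)) : Set (En d) :=
  {y ∈ polarSet P | ∀ x ∈ F, ⟪x, y⟫ = 1}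

/-- The face `F` of `P` contains a nondegenerate equilibrium point with respect to the
origin: there is `q` in the relative interior of `F` such that the hyperplane through
`q` orthogonal to `q` supports `P` and meets `P` exactly in `F`. -/
def HasNondegEquil {d : ℕ} (P F : Set (En d)) : Prop :=
  ∃ q ∈ intrinsicInterior ℝ F,
    (∀ x ∈ P, ⟪x, q⟫ ≤ ⟪q, q⟫) ∧ {x ∈ P | ⟪x, q⟫ = ⟪q, q⟫} = F

variable {d : ℕ}


lemma mem_intrinsicInterior_of_open {S : Set (En d)} {A : AffineSubspace ℝ (En d)}
    (hSA : S ⊆ (A : Set (En d))) {q : En d} (hqS : q ∈ S) {U : Set (En d)}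
    (hU : IsOpen U) (hqU : q ∈ U) (hsub : U ∩ (A : Set (En d)) ⊆ S) :
    q ∈ intrinsicInterior ℝ S := by
  have hspan : affineSpan ℝ S ≤ A := affineSpan_le.2 hSA
  have hqspan : q ∈ affineSpan ℝ S := subset_affineSpan ℝ S hqS
  rw [mem_intrinsicInterior]
  refine ⟨⟨q, hqspan⟩, ?_, rfl⟩
  have hopen : IsOpen ((↑) ⁻¹' U : Set (affineSpan ℝ S)) :=
    hU.preimage continuous_subtype_val
  have hss : ((↑) ⁻¹' U : Set (affineSpan ℝ S)) ⊆ (↑) ⁻¹' S := fun z hz =>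
    hsub ⟨hz, hspan z.2⟩
  exact interior_mono hss (hopen.subset_interior_iff.mpr subset_rfl hqU)

/-- radial extension from an intrinsic interior point past any point of the set. -/
lemma radial_ext {F : Set (En d)} {q x : En d} (hq : q ∈ intrinsicInterior ℝ F)
    (hx : x ∈ F) : ∃ ε : ℝ, 0 < ε ∧ q + ε • (q - x) ∈ F := by
  rw [mem_intrinsicInterior] at hq
  obtain ⟨⟨q, hqspan⟩, hqint, rfl⟩ := hq
  have hxspan : x ∈ affineSpan ℝ F := subset_affineSpan ℝ F hx
  have hline : ∀ t : ℝ, q + t • (q - x) ∈ affineSpan ℝ F := by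
    intro t
    have := AffineSubspace.smul_vsub_vadd_mem (affineSpan ℝ F) t hqspan hxspan hqspan
    simpa [vsub_eq_sub, vadd_eq_add, add_comm] using this
  set γ : ℝ → affineSpan ℝ F := fun t => ⟨q + t • (q - x), hline t⟩ with hγ
  have hcont : Continuous γ := by
    apply Continuous.subtype_mk
    continuity
  have h0 : γ 0 ∈ interior ((↑) ⁻¹' F : Set (affineSpan ℝ F)) := by
    simpa [hγ] using hqint
  have : γ ⁻¹' interior ((↑) ⁻¹' F) ∈ nhds (0 : ℝ) :=
    hcont.continuousAt.preimage_mem_nhds (isOpen_interior.mem_nhds h0)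
  obtain ⟨δ, hδ, hball⟩ := Metric.mem_nhds_iff.1 this
  refine ⟨δ / 2, by positivity, ?_⟩
  have hmem : γ (δ / 2) ∈ interior ((↑) ⁻¹' F) := by
    apply hball
    simp only [Metric.mem_ball, Real.dist_eq, sub_zero]
    rw [abs_of_pos (by positivity)]
    linarith
  have := interior_subset hmem
  simpa [hγ] using this



lemma inner_cont (v : En d) : Continuous (fun y : En d => ⟪v, y⟫) :=
  Continuous.inner continuous_const continuous_id

lemma polar_eq_iInter (V : Finset (En d)) :
    polarSet (convexHull ℝ (V : Set (En d))) = ⋂ v ∈ V, {y : En d | ⟪v, y⟫ ≤ 1} := by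
  ext y
  constructor
  · intro hy
    exact Set.mem_iInter₂.2 fun v hv => hy v (subset_convexHull ℝ _ hv)
  · intro hy x hx
    have hsub : convexHull ℝ (V : Set (En d)) ⊆ {x : En d | ⟪x, y⟫ ≤ 1} := by
      apply convexHull_min
      · intro v hv
        exact Set.mem_iInter₂.1 hy v (Finset.mem_coe.1 hv)
      · exact convex_halfSpace_le (𝕜 := ℝ)
          ⟨fun a b => inner_add_left a b y, fun r a => by rw [real_inner_smul_left, smul_eq_mul]⟩ (1:ℝ)
    exact hsub hx

lemma polar_closed (P : Set (En d)) : IsClosed (polarSet P) := by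
  have h : polarSet P = ⋂ x ∈ P, {y : En d | ⟪x, y⟫ ≤ 1} := by
    ext y; simp [polarSet, Set.mem_iInter₂]
  rw [h]
  exact isClosed_biInter fun x _ => isClosed_le (inner_cont x) continuous_const

lemma polar_convex (P : Set (En d)) : Convex ℝ (polarSet P) := by
  intro y₁ hy₁ y₂ hy₂ a b ha hb hab x hx
  have := hy₁ x hx
  have := hy₂ x hx
  rw [inner_add_right, real_inner_smul_right, real_inner_smul_right]
  nlinarith

lemma zero_mem_polar (P : Set (En d)) : (0 : En d) ∈ polarSet P := by
  intro x _
  simp [inner_zero_right]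

lemma polar_compact {P : Set (En d)} (hint : (0 : En d) ∈ interior P) :
    IsCompact (polarSet P) := by
  obtain ⟨r, hr, hball⟩ := Metric.mem_nhds_iff.1 (mem_interior_iff_mem_nhds.1 hint)
  have hbdd : polarSet P ⊆ Metric.closedBall 0 (2 / r) := by
    intro y hy
    rcases eq_or_ne y 0 with rfl | hy0
    · simp; positivity
    · have hym : (r / 2) • ‖y‖⁻¹ • y ∈ Metric.ball (0 : En d) r := by
        simp only [Metric.mem_ball, dist_zero_right, norm_smul, norm_inv, norm_norm,
          Real.norm_eq_abs]
        rw [abs_of_nonneg (norm_nonneg y), abs_of_pos (by positivity),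
          inv_mul_cancel₀ (norm_ne_zero_iff.2 hy0)]
        linarith
      have h1 : ⟪(r / 2) • ‖y‖⁻¹ • y, y⟫ ≤ 1 := hy _ (hball hym)
      rw [real_inner_smul_left, real_inner_smul_left, real_inner_self_eq_norm_sq] at h1
      have hny : 0 < ‖y‖ := norm_pos_iff.2 hy0
      have h2 : r / 2 * ‖y‖ ≤ 1 := by
        have : ‖y‖⁻¹ * ‖y‖ ^ 2 = ‖y‖ := by
          rw [pow_two, ← mul_assoc, inv_mul_cancel₀ (ne_of_gt hny), one_mul]
        rw [this] at h1
        exact h1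
      simp only [Metric.mem_closedBall, dist_zero_right]
      rw [le_div_iff₀ hr]
      linarith
  exact Metric.isCompact_of_isClosed_isBounded (polar_closed P)
    (Bornology.IsBounded.subset Metric.isBounded_closedBall hbdd)

lemma bipolar {P : Set (En d)} (hconv : Convex ℝ P) (hclosed : IsClosed P)
    (h0 : (0 : En d) ∈ P) : polarSet (polarSet P) = P := by
  apply Set.Subset.antisymm
  · intro x hx
    by_contra hxP
    obtain ⟨f, u, hfa, hfx⟩ := geometric_hahn_banach_closed_point hconv hclosed hxP
    have hu : (0:ℝ) < u := by
      have := hfa 0 h0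
      simpa using this
    set w : En d := (InnerProductSpace.toDual ℝ (En d)).symm f with hw
    have hwz : ∀ z : En d, ⟪w, z⟫ = f z := fun z => InnerProductSpace.toDual_symm_apply
    have hy : u⁻¹ • w ∈ polarSet P := by
      intro a ha
      rw [real_inner_comm, real_inner_smul_left, hwz]
      have := le_of_lt (hfa a ha)
      calc u⁻¹ * f a ≤ u⁻¹ * u := mul_le_mul_of_nonneg_left this (le_of_lt (inv_pos.2 hu))
        _ = 1 := inv_mul_cancel₀ (ne_of_gt hu)
    have hle : ⟪u⁻¹ • w, x⟫ ≤ 1 := hx _ hy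
    rw [real_inner_smul_left, hwz] at hle
    have : f x ≤ u := by
      have h2 := mul_le_mul_of_nonneg_left hle (le_of_lt hu)
      rw [← mul_assoc, mul_inv_cancel₀ (ne_of_gt hu), one_mul, mul_one] at h2
      exact h2
    linarith
  · intro x hx y hy
    rw [real_inner_comm]
    exact hy x hx

lemma polar_extremePoints_finite (V : Finset (En d)) :
    (Set.extremePoints ℝ (polarSet (convexHull ℝ (V : Set (En d))))).Finite := by
  classical
  set Q := polarSet (convexHull ℝ (V : Set (En d))) with hQdef
  have hQmem : ∀ y : En d, y ∈ Q ↔ ∀ v ∈ V, ⟪v, y⟫ ≤ 1 := by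
    intro y
    rw [hQdef, polar_eq_iInter]
    simp [Set.mem_iInter₂]
  set φ : En d → Finset (En d) := fun y => V.filter (fun v => ⟪v, y⟫ = 1) with hφdef
  apply Set.Finite.of_finite_image (f := φ)
  · apply Set.Finite.subset (V.powerset : Finset (Finset (En d))).finite_toSet
    rintro _ ⟨y, _, rfl⟩
    simp only [Finset.coe_powerset, Set.mem_preimage, Set.mem_powerset_iff, Finset.coe_subset]
    exact Finset.filter_subset _ _
  · intro e he f hf hef
    by_contra hne
    rw [mem_extremePoints] at he hf
    have hact : ∀ v ∈ V, ⟪v, e⟫ = 1 ↔ ⟪v, f⟫ = 1 := by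
      intro v hv
      constructor
      · intro h
        have : v ∈ φ e := Finset.mem_filter.2 ⟨hv, h⟩
        rw [hef] at this
        exact (Finset.mem_filter.1 this).2
      · intro h
        have : v ∈ φ f := Finset.mem_filter.2 ⟨hv, h⟩
        rw [← hef] at this
        exact (Finset.mem_filter.1 this).2
    -- find small t > 0 with e + t • (e - f) ∈ Q
    set T : Finset (En d) := V.filter (fun v => ⟪v, e⟫ < 1) with hTdef
    set U : Set (En d) := ⋂ v ∈ T, {y | ⟪v, y⟫ < 1} with hUdef
    have hUopen : IsOpen U := isOpen_biInter_finset fun v _ =>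
      isOpen_lt (inner_cont v) continuous_const
    have heU : e ∈ U := Set.mem_iInter₂.2 fun v hv => (Finset.mem_filter.1 hv).2
    have hcont : Continuous (fun t : ℝ => e + t • (e - f)) :=
      continuous_const.add (continuous_id.smul continuous_const)
    have : (fun t : ℝ => e + t • (e - f)) ⁻¹' U ∈ nhds (0:ℝ) := by
      apply hcont.continuousAt.preimage_mem_nhds
      apply hUopen.mem_nhds
      simpa using heU
    obtain ⟨δ, hδ, hball⟩ := Metric.mem_nhds_iff.1 this
    set t : ℝ := δ / 2 with htdef
    have ht : 0 < t := by positivity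
    have hgU : e + t • (e - f) ∈ U := by
      apply hball
      simp only [Metric.mem_ball, Real.dist_eq, sub_zero, htdef]
      rw [abs_of_pos (by positivity)]
      linarith
    set g : En d := e + t • (e - f) with hgdef
    have hgQ : g ∈ Q := by
      rw [hQmem]
      intro v hv
      by_cases hv1 : ⟪v, e⟫ = 1
      · have hv2 : ⟪v, f⟫ = 1 := (hact v hv).1 hv1
        rw [hgdef, inner_add_right, real_inner_smul_right, inner_sub_right, hv1, hv2]
        ring_nf
        linarith [le_refl (1:ℝ)]
      · have hvT : v ∈ T := Finset.mem_filter.2 ⟨hv, lt_of_le_of_ne ((hQmem e).1 he.1 v hv) hv1⟩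
        exact le_of_lt (Set.mem_iInter₂.1 hgU v hvT)
    have hfQ : f ∈ Q := hf.1
    have hseg : e ∈ openSegment ℝ f g := by
      refine ⟨t / (1 + t), 1 / (1 + t), by positivity, by positivity, ?_, ?_⟩
      · field_simp; ring
      · rw [hgdef]
        match_scalars <;> field_simp <;> ring
    have := (he.2 f hfQ g hgQ hseg).1
    exact hne this.symm

lemma polar_polytope (V : Finset (En d)) (hint : (0 : En d) ∈ interior (convexHull ℝ (V : Set (En d)))) :
    ∃ V' : Finset (En d), polarSet (convexHull ℝ (V : Set (En d))) = convexHull ℝ (V' : Set (En d)) := by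
  classical
  set Q := polarSet (convexHull ℝ (V : Set (En d))) with hQdef
  have hcomp : IsCompact Q := polar_compact hint
  have hconv : Convex ℝ Q := polar_convex _
  have hfin : (Set.extremePoints ℝ Q).Finite := polar_extremePoints_finite V
  refine ⟨hfin.toFinset, ?_⟩
  have hKM := closure_convexHull_extremePoints hcomp hconv
  have hclosed : IsClosed (convexHull ℝ (Set.extremePoints ℝ Q)) :=
    hfin.isClosed_convexHull (𝕜 := ℝ)
  rw [hclosed.closure_eq] at hKM
  rw [hfin.coe_toFinset]
  exact hKM.symm

lemma exposing_vector {P F : Set (En d)} (hFP : F ⊆ P) (hexp : IsExposed ℝ P F)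
    (hFne : F.Nonempty) (hne : F ≠ P) (hint : (0 : En d) ∈ interior P) :
    ∃ u : En d, u ∈ dualFace P F ∧ F = {x ∈ P | ⟪x, u⟫ = 1} := by
  obtain ⟨l, hl⟩ := hexp hFne
  obtain ⟨x₀, hx₀⟩ := hFne
  have hx₀' : x₀ ∈ P ∧ ∀ z ∈ P, l z ≤ l x₀ := by rw [hl] at hx₀; exact hx₀
  set c : ℝ := l x₀ with hcdef
  have hlF : ∀ x ∈ F, l x = c := by
    intro x hx
    have hx' : x ∈ P ∧ ∀ z ∈ P, l z ≤ l x := by rw [hl] at hx; exact hx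
    exact le_antisymm (hx₀'.2 x hx'.1) (hx'.2 x₀ hx₀'.1)
  have hlP : ∀ z ∈ P, l z ≤ c := hx₀'.2
  -- c > 0
  have hc : 0 < c := by
    obtain ⟨z, hzP, hzF⟩ : ∃ z, z ∈ P ∧ z ∉ F := by
      by_contra h
      push_neg at h
      exact hne (Set.Subset.antisymm hFP fun z hz => h z hz)
    have hlz : l z < c := by
      rcases lt_or_eq_of_le (hlP z hzP) with h | h
      · exact h
      · exfalso
        apply hzF
        rw [hl]
        exact ⟨hzP, fun w hw => h ▸ hlP w hw⟩
    have hlw : 0 < l (x₀ - z) := by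
      rw [map_sub]
      have : l x₀ = c := hcdef.symm
      linarith
    have hw0 : x₀ - z ≠ 0 := by
      intro h
      rw [h, map_zero] at hlw
      exact lt_irrefl 0 hlw
    have hnw : 0 < ‖x₀ - z‖ := norm_pos_iff.2 hw0
    obtain ⟨r, hr, hball⟩ := Metric.mem_nhds_iff.1 (mem_interior_iff_mem_nhds.1 hint)
    have hsw : (r / (2 * ‖x₀ - z‖)) • (x₀ - z) ∈ Metric.ball (0 : En d) r := by
      simp only [Metric.mem_ball, dist_zero_right, norm_smul, Real.norm_eq_abs]
      rw [abs_of_pos (by positivity)]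
      have he : r / (2 * ‖x₀ - z‖) * ‖x₀ - z‖ = r / 2 := by
        field_simp
      rw [he]
      linarith
    have hlsw : 0 < l ((r / (2 * ‖x₀ - z‖)) • (x₀ - z)) := by
      rw [map_smul, smul_eq_mul]
      positivity
    exact lt_of_lt_of_le hlsw (hlP _ (hball hsw))
  -- define u
  set w : En d := (InnerProductSpace.toDual ℝ (En d)).symm l with hwdef
  have hwz : ∀ z : En d, ⟪w, z⟫ = l z := fun z => InnerProductSpace.toDual_symm_apply
  set u : En d := c⁻¹ • w with hudef
  have huz : ∀ z : En d, ⟪z, u⟫ = c⁻¹ * l z := by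
    intro z
    rw [real_inner_comm, hudef, real_inner_smul_left, hwz]
  refine ⟨u, ⟨?_, ?_⟩, ?_⟩
  · intro x hx
    rw [huz]
    calc c⁻¹ * l x ≤ c⁻¹ * c := mul_le_mul_of_nonneg_left (hlP x hx) (le_of_lt (inv_pos.2 hc))
      _ = 1 := inv_mul_cancel₀ (ne_of_gt hc)
  · intro x hx
    rw [huz, hlF x hx]
    exact inv_mul_cancel₀ (ne_of_gt hc)
  · ext x
    constructor
    · intro hx
      refine ⟨hFP hx, ?_⟩
      rw [huz, hlF x hx]
      exact inv_mul_cancel₀ (ne_of_gt hc)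
    · rintro ⟨hxP, hxu⟩
      rw [huz] at hxu
      have hlx : l x = c := by
        field_simp at hxu
        exact hxu
      rw [hl]
      exact ⟨hxP, fun z hz => hlx ▸ hlP z hz⟩

/-- the affine subspace of points having inner product 1 with everything in F -/
def dualAff (F : Set (En d)) : AffineSubspace ℝ (En d) where
  carrier := {y | ∀ x ∈ F, ⟪x, y⟫ = 1}
  smul_vsub_vadd_mem' := by
    intro t p₁ p₂ p₃ h₁ h₂ h₃ x hx
    have e : (t • (p₁ -ᵥ p₂) +ᵥ p₃ : En d) = t • (p₁ - p₂) + p₃ := rfl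
    rw [e, inner_add_right, inner_smul_right, inner_sub_right, h₁ x hx, h₂ x hx, h₃ x hx]
    ring

lemma lemL (V : Finset (En d)) (P F : Set (En d))
    (hPV : P = convexHull ℝ (V : Set (En d))) (hne : F ≠ P)
    (h : HasNondegEquil P F) : HasNondegEquil (polarSet P) (dualFace P F) := by
  classical
  obtain ⟨q, hq, hsupp, hface⟩ := h
  have hqF : q ∈ F := intrinsicInterior_subset hq
  have hFP : F ⊆ P := by rw [← hface]; exact fun x hx => hx.1
  have hq0 : q ≠ 0 := by
    rintro rfl
    apply hne
    rw [← hface]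
    ext x
    simp [inner_zero_right]
  have hc : (0:ℝ) < ⟪q, q⟫ := by
    rw [real_inner_self_eq_norm_sq]
    exact pow_pos (norm_pos_iff.2 hq0) 2
  set c : ℝ := ⟪q, q⟫ with hcdef
  set q' : En d := c⁻¹ • q with hq'def
  have hinner : ∀ x : En d, ⟪x, q'⟫ = c⁻¹ * ⟪x, q⟫ := fun x => real_inner_smul_right x q c⁻¹
  have hinner' : ∀ x : En d, ⟪q', x⟫ = c⁻¹ * ⟪q, x⟫ := fun x => real_inner_smul_left q x c⁻¹
  have hq'q' : ⟪q', q'⟫ = c⁻¹ := by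
    rw [hinner, hinner', ← hcdef]; field_simp
  have hqq'1 : ⟪q, q'⟫ = 1 := by rw [hinner, ← hcdef]; field_simp
  -- q' is in the dual face
  have hq'P : q' ∈ polarSet P := by
    intro x hx
    rw [hinner]
    calc c⁻¹ * ⟪x, q⟫ ≤ c⁻¹ * c := by
          exact mul_le_mul_of_nonneg_left (hsupp x hx) (le_of_lt (inv_pos.2 hc))
      _ = 1 := by field_simp
  have hq'F : ∀ x ∈ F, ⟪x, q'⟫ = 1 := by
    intro x hx
    have hx' : ⟪x, q⟫ = c := by
      have := hface ▸ hx
      exact this.2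
    rw [hinner, hx']; field_simp
  have hq'dual : q' ∈ dualFace P F := ⟨hq'P, hq'F⟩
  -- positivity for vertices outside F
  have hvert : ∀ v ∈ V, v ∉ F → ⟪v, q'⟫ < 1 := by
    intro v hv hvF
    have hvP : v ∈ P := hPV ▸ subset_convexHull ℝ _ hv
    have hlt : ⟪v, q⟫ < c := by
      rcases lt_or_eq_of_le (hsupp v hvP) with h | h
      · exact h
      · exact absurd (hface ▸ ⟨hvP, h⟩ : v ∈ F) hvF
    rw [hinner]
    calc c⁻¹ * ⟪v, q⟫ < c⁻¹ * c := by
          exact mul_lt_mul_of_pos_left hlt (inv_pos.2 hc)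
      _ = 1 := by field_simp
  refine ⟨q', ?_, ?_, ?_⟩
  · -- relative interior
    set T : Finset (En d) := V.filter (fun v => v ∉ F) with hTdef
    set U : Set (En d) := ⋂ v ∈ T, {y | ⟪v, y⟫ < 1} with hUdef
    have hUopen : IsOpen U := by
      apply isOpen_biInter_finset
      intro v _
      exact isOpen_lt (Continuous.inner continuous_const continuous_id) continuous_const
    have hq'U : q' ∈ U := by
      rw [hUdef]
      simp only [Set.mem_iInter]
      intro v hv
      rw [hTdef] at hv
      simp only [Finset.mem_filter] at hv
      exact hvert v hv.1 hv.2
    apply mem_intrinsicInterior_of_open (A := dualAff F) (fun y hy => hy.2) hq'dual hUopen hq'U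
    rintro y ⟨hyU, hyA⟩
    have hyA' : ∀ x ∈ F, ⟪x, y⟫ = 1 := hyA
    refine ⟨?_, hyA'⟩
    rw [hPV]
    apply convexHull_min
    · intro v hv
      by_cases hvF : v ∈ F
      · exact le_of_eq (hyA' v hvF)
      · have hvT : v ∈ T := by
          rw [hTdef]; exact Finset.mem_filter.2 ⟨Finset.mem_coe.1 hv, hvF⟩
        have hlt := Set.mem_iInter₂.1 hyU v hvT
        exact le_of_lt (Set.mem_setOf_eq ▸ hlt)
    · exact convex_halfSpace_le (𝕜 := ℝ)
        ⟨fun a b => inner_add_left a b y, fun r a => by rw [real_inner_smul_left, smul_eq_mul]⟩ (1:ℝ)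
  · -- support
    intro y hy
    rw [real_inner_comm, hinner', hq'q']
    have : ⟪q, y⟫ ≤ 1 := hy q (hFP hqF)
    calc c⁻¹ * ⟪q, y⟫ ≤ c⁻¹ * 1 := mul_le_mul_of_nonneg_left this (le_of_lt (inv_pos.2 hc))
      _ = c⁻¹ := by ring
  · -- exact face
    ext y
    constructor
    · rintro ⟨hyP, hyq⟩
      have hqy1 : ⟪q, y⟫ = 1 := by
        rw [real_inner_comm, hinner', hq'q'] at hyq
        have hcne : c⁻¹ ≠ (0:ℝ) := ne_of_gt (inv_pos.2 hc)
        field_simp at hyq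
        exact hyq
      refine ⟨hyP, fun x hx => ?_⟩
      obtain ⟨ε, hε, hz⟩ := radial_ext hq hx
      have hzle : ⟪q + ε • (q - x), y⟫ ≤ 1 := hyP _ (hFP hz)
      rw [inner_add_left, real_inner_smul_left, inner_sub_left, hqy1] at hzle
      have hxle : ⟪x, y⟫ ≤ 1 := hyP x (hFP hx)
      nlinarith
    · rintro ⟨hyP, hyF⟩
      refine ⟨hyP, ?_⟩
      rw [real_inner_comm, hinner', hq'q', hyF q hqF, mul_one]

/-- A `k`-face `F` of a convex `d`-polytope `P` with the origin in its interior contains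
a nondegenerate equilibrium point with respect to the origin if and only if the
corresponding `(d-k-1)`-face `F*` of the polar polytope `P°` does. -/
theorem polar_equilibrium (d k : ℕ) (hd : 0 < d) (hk : k ≤ d - 1)
    (P : Set (En d)) (hP : ∃ V : Finset (En d), P = convexHull ℝ (V : Set (En d)))
    (hint : (0 : En d) ∈ interior P)
    (F : Set (En d)) (hF : F ∈ kFacesD P k) :
    HasNondegEquil P F ↔ HasNondegEquil (polarSet P) (dualFace P F) := by
  obtain ⟨V, hPV⟩ := hP
  obtain ⟨hFexp, hFne, hFdim⟩ := hF
  have hFP : F ⊆ P := hFexp.subset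
  have hPconv : Convex ℝ P := hPV ▸ convex_convexHull ℝ _
  have hPclosed : IsClosed P := hPV ▸ V.finite_toSet.isClosed_convexHull (𝕜 := ℝ)
  have h0P : (0 : En d) ∈ P := interior_subset hint
  -- F ≠ P by dimension
  have hPdim : faceDimD P = d := by
    have hspan : affineSpan ℝ P = ⊤ :=
      (Convex.interior_nonempty_iff_affineSpan_eq_top hPconv).1 ⟨0, hint⟩
    have hvs : vectorSpan ℝ P = ⊤ := by
      rw [← direction_affineSpan, hspan]
      exact AffineSubspace.direction_top ℝ _ _
    rw [faceDimD, hvs]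
    simp [finrank_top]
  have hneFP : F ≠ P := by
    intro h
    rw [h, hPdim] at hFdim
    omega
  constructor
  · exact lemL V P F hPV hneFP
  · intro h
    obtain ⟨u, hu, hFu⟩ := exposing_vector hFP hFexp hFne hneFP hint
    obtain ⟨V', hQV'⟩ := polar_polytope V (hPV ▸ hint)
    have hne2 : dualFace P F ≠ polarSet P := by
      intro heq
      obtain ⟨x₀, hx₀⟩ := hFne
      have h0d : (0 : En d) ∈ dualFace P F := heq ▸ zero_mem_polar P
      have := h0d.2 x₀ hx₀
      rw [inner_zero_right] at this
      exact zero_ne_one this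
    have hmain := lemL V' (polarSet P) (dualFace P F) (by rw [hPV]; exact hQV') hne2 h
    have hbi : polarSet (polarSet P) = P := bipolar hPconv hPclosed h0P
    have hdd : dualFace (polarSet P) (dualFace P F) = F := by
      ext x
      constructor
      · rintro ⟨hx1, hx2⟩
        have hxP : x ∈ P := hbi ▸ hx1
        have := hx2 u hu
        rw [real_inner_comm] at this
        rw [hFu]
        exact ⟨hxP, this⟩
      · intro hx
        refine ⟨hbi.symm ▸ hFP hx, ?_⟩
        intro y hy
        rw [real_inner_comm]
        exact hy.2 x hx
    rw [hbi, hdd] at hmain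
    exact hmain
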